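/- Let f : ℕ → ℝ be multiplicative (f(xy) = f(x)f(y) whenever gcd(x,y)=1) and satisfy f(x) ≤ f(y) whenever x divides y. If x_1 < ... < x_n are positive integers whose GCD matrix (gcd(x_i,x_j))_{i,j} is totally nonnegative, then the matrix (f(gcd(x_i,x_j)))_{i,j} is also totally nonnegative. -/

import Mathlib

/-- A real matrix is totally nonnegative if every square minor is nonnegative. -/
def TotallyNonneg {n : ℕ} (A : Matrix (Fin n) (Fin n) ℝ) : Prop :=
  ∀ (k : ℕ) (r c : Fin k → Fin n), StrictMono r → StrictMono c →
    0 ≤ (A.submatrix r c).det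


open Matrix

-- f(a) f(b) = f(gcd) f(lcm) for multiplicative f
lemma f_gcd_mul_lcm (f : ℕ → ℝ)
    (hmul : ∀ x y : ℕ, 0 < x → 0 < y → Nat.Coprime x y → f (x * y) = f x * f y)
    (h1 : f 1 = 1) (a b : ℕ) (ha : a ≠ 0) (hb : b ≠ 0) :
    f a * f b = f (Nat.gcd a b) * f (Nat.lcm a b) := by
  have hmul' : ∀ x y : ℕ, Nat.Coprime x y → f (x * y) = f x * f y := by
    intro x y hc
    rcases Nat.eq_zero_or_pos x with hx | hx
    · subst hx
      have : y = 1 := by simpa [Nat.Coprime] using hc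
      simp [this, h1]
    rcases Nat.eq_zero_or_pos y with hy | hy
    · subst hy
      have : x = 1 := by simpa [Nat.Coprime] using hc
      simp [this, h1]
    exact hmul x y hx hy hc
  have hfact : ∀ {m : ℕ}, m ≠ 0 → f m = m.factorization.prod fun p k => f (p ^ k) := fun hm => Nat.multiplicative_factorization f hmul' h1 hm
  have hg : Nat.gcd a b ≠ 0 := Nat.gcd_ne_zero_left ha
  have hl : Nat.lcm a b ≠ 0 := Nat.lcm_ne_zero ha hb
  rw [hfact ha, hfact hb, hfact hg, hfact hl]
  set s : Finset ℕ := a.factorization.support ∪ b.factorization.support with hs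
  have hsub1 : a.factorization.support ⊆ s := Finset.subset_union_left
  have hsub2 : b.factorization.support ⊆ s := Finset.subset_union_right
  have hgf : (Nat.gcd a b).factorization = a.factorization ⊓ b.factorization :=
    Nat.factorization_gcd ha hb
  have hlf : (Nat.lcm a b).factorization = a.factorization ⊔ b.factorization :=
    Nat.factorization_lcm ha hb
  have hsubg : (Nat.gcd a b).factorization.support ⊆ s := by
    intro p hp
    rw [Finsupp.mem_support_iff] at hp
    rw [hgf] at hp
    simp only [Finsupp.inf_apply] at hp
    have : a.factorization p ≠ 0 := fun h => hp (by simp [h])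
    exact hsub1 (Finsupp.mem_support_iff.2 this)
  have hsubl : (Nat.lcm a b).factorization.support ⊆ s := by
    intro p hp
    rw [Finsupp.mem_support_iff] at hp
    rw [hlf] at hp
    simp only [Finsupp.sup_apply] at hp
    rcases Nat.eq_zero_or_pos (a.factorization p) with h | h
    · have : b.factorization p ≠ 0 := fun h2 => hp (by simp [h, h2])
      exact hsub2 (Finsupp.mem_support_iff.2 this)
    · exact hsub1 (Finsupp.mem_support_iff.2 h.ne')
  have hone : ∀ (σ : ℕ →₀ ℕ), σ.support ⊆ s →
      σ.prod (fun p k => f (p ^ k)) = ∏ p ∈ s, f (p ^ σ p) := by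
    intro σ hσ
    exact Finsupp.prod_of_support_subset σ hσ _ (fun p _ => by simp [h1])
  rw [hone _ hsub1, hone _ hsub2, hone _ hsubg, hone _ hsubl,
    ← Finset.prod_mul_distrib, ← Finset.prod_mul_distrib]
  apply Finset.prod_congr rfl
  intro p _
  rw [hgf, hlf]
  simp only [Finsupp.inf_apply, Finsupp.sup_apply]
  rcases le_total (a.factorization p) (b.factorization p) with h | h
  · rw [min_eq_left h, max_eq_right h]  -- careful: inf/sup on ℕ
  · rw [min_eq_right h, max_eq_left h]
    ring

-- Step lemma: assuming u 0 ≤ v 0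
lemma minker_step (k : ℕ)
    (IH : ∀ (t : ℕ → ℝ), Monotone t → (∀ s, 0 ≤ t s) →
      ∀ (u v : Fin k → ℕ), StrictMono u → StrictMono v →
      0 ≤ (Matrix.of fun a b => t (min (u a) (v b))).det)
    (t : ℕ → ℝ) (ht : Monotone t) (htn : ∀ s, 0 ≤ t s)
    (u v : Fin (k+1) → ℕ) (hu : StrictMono u) (hv : StrictMono v)
    (h0 : u 0 ≤ v 0) :
    0 ≤ (Matrix.of fun a b => t (min (u a) (v b))).det := by
  set M : Matrix (Fin (k+1)) (Fin (k+1)) ℝ := Matrix.of fun a b => t (min (u a) (v b)) with hM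
  have hrow0 : ∀ b, M 0 b = t (u 0) := by
    intro b
    have : u 0 ≤ v b := h0.trans (hv.monotone (Fin.zero_le b))
    simp [hM, min_eq_left this]
  rcases eq_or_lt_of_le (htn (u 0)) with hz | hpos
  · -- t (u 0) = 0, row 0 is zero
    have : M.det = 0 := Matrix.det_eq_zero_of_row_eq_zero 0 (fun b => by rw [hrow0 b, ← hz])
    rw [this]
  by_cases hcase : ∃ a : Fin (k+1), a ≠ 0 ∧ u a ≤ v 0
  · -- two proportional constant rows
    obtain ⟨a, ha0, hav⟩ := hcase
    have hrowa : ∀ b, M a b = t (u a) := by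
      intro b
      have : u a ≤ v b := hav.trans (hv.monotone (Fin.zero_le b))
      simp [hM, min_eq_left this]
    set c : ℝ := t (u a) / t (u 0) with hc
    have hMa : M a = c • M 0 := by
      funext b
      rw [hrowa b]
      simp only [Pi.smul_apply, smul_eq_mul, hrow0 b, hc]
      field_simp
    have h1 : M = M.updateRow a (c • M 0) := by
      rw [← hMa, Matrix.updateRow_eq_self]
    have h2 : M.det = c * (M.updateRow a (M 0)).det := by
      conv_lhs => rw [h1]
      rw [Matrix.det_updateRow_smul]
    have h3 : (M.updateRow a (M 0)).det = 0 := by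
      apply Matrix.det_zero_of_row_eq (Ne.symm ha0)
      rw [Matrix.updateRow_self, Matrix.updateRow_ne ha0.symm]
    rw [h2, h3, mul_zero]
  · push_neg at hcase
    -- main case: for all a ≠ 0, v 0 < u a
    set c : Fin (k+1) → ℝ := fun a => if a = 0 then 0 else t (v 0) / t (u 0) with hcdef
    set M' : Matrix (Fin (k+1)) (Fin (k+1)) ℝ :=
      Matrix.of (fun a b => if a = 0 then t (u 0) else t (min (u a) (v b)) - t (v 0)) with hM'
    have hdet : M.det = M'.det := by
      apply Matrix.det_eq_of_forall_row_eq_smul_add_const c 0 (by simp [hcdef])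
      intro a b
      by_cases ha : a = 0
      · subst ha
        simp [hM, hM', hcdef, hrow0]
        have : u 0 ≤ v b := h0.trans (hv.monotone (Fin.zero_le b))
        rw [min_eq_left this]
      · have h1 : M a b = t (min (u a) (v b)) := rfl
        have h2 : M' a b = t (min (u a) (v b)) - t (v 0) := by simp [hM', ha]
        have h3 : M' 0 b = t (u 0) := by simp [hM']
        rw [h1, h2, h3]
        simp only [hcdef, if_neg ha]
        field_simp
        ring
    rw [hdet]
    -- expand along column 0
    have hcol : ∀ a : Fin (k+1), a ≠ 0 → M' a 0 = 0 := by
      intro a ha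
      have : v 0 < u a := hcase a ha
      have : min (u a) (v 0) = v 0 := min_eq_right this.le
      simp [hM', ha, this]
    rw [Matrix.det_succ_column_zero]
    rw [Finset.sum_eq_single 0]
    · simp only [Fin.val_zero, pow_zero, one_mul, Fin.succAbove_zero]
      have hM'00 : M' 0 0 = t (u 0) := by simp [hM']
      rw [hM'00]
      apply mul_nonneg hpos.le
      -- submatrix is a min-kernel with shifted t
      set t' : ℕ → ℝ := fun s => t (max s (v 0 + 1)) - t (v 0) with ht'
      have ht'mono : Monotone t' := by
        intro i j hij
        simp only [ht']
        have := ht (max_le_max hij (le_refl (v 0 + 1)))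
        linarith
      have ht'nn : ∀ s, 0 ≤ t' s := by
        intro s
        simp only [ht']
        have := ht (le_max_right s (v 0 + 1))
        have h2 := ht (Nat.le_succ (v 0))
        linarith
      have heq : (M'.submatrix Fin.succ Fin.succ) =
          Matrix.of (fun a b => t' (min (u (Fin.succ a)) (v (Fin.succ b)))) := by
        ext a b
        have hne : (Fin.succ a : Fin (k+1)) ≠ 0 := Fin.succ_ne_zero a
        have h1 : v 0 < u (Fin.succ a) := hcase _ hne
        have h2 : v 0 < v (Fin.succ b) := hv (Fin.succ_pos b)
        have h3 : v 0 + 1 ≤ min (u (Fin.succ a)) (v (Fin.succ b)) := le_min h1 h2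
        simp only [Matrix.submatrix_apply, hM', Matrix.of_apply, if_neg hne, ht']
        rw [max_eq_left h3]
      rw [heq]
      exact IH t' ht'mono ht'nn (u ∘ Fin.succ) (v ∘ Fin.succ)
        (hu.comp Fin.strictMono_succ) (hv.comp Fin.strictMono_succ)
    · intro a _ ha
      rw [hcol a ha]
      ring
    · intro h
      exact absurd (Finset.mem_univ 0) h

lemma minker : ∀ (k : ℕ) (t : ℕ → ℝ), Monotone t → (∀ s, 0 ≤ t s) →
    ∀ (u v : Fin k → ℕ), StrictMono u → StrictMono v →
    0 ≤ (Matrix.of fun a b => t (min (u a) (v b))).det := by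
  intro k
  induction k with
  | zero => intro t _ _ u v _ _; rw [Matrix.det_isEmpty]; norm_num
  | succ k IH =>
    intro t ht htn u v hu hv
    rcases le_total (u 0) (v 0) with h | h
    · exact minker_step k IH t ht htn u v hu hv h
    · rw [← Matrix.det_transpose]
      have : (Matrix.of fun a b => t (min (u a) (v b))).transpose =
          Matrix.of fun a b => t (min (v a) (u b)) := by
        ext a b
        simp [Matrix.transpose_apply, min_comm]
      rw [this]
      exact minker_step k IH t ht htn v u hv hu h

lemma gcd_struct (a b c : ℕ) (ha : 0 < a) (hb : 0 < b) (hc : 0 < c)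
    (h : Nat.gcd a c * b ≤ Nat.gcd a b * Nat.gcd b c) :
    Nat.gcd (Nat.gcd a b) (Nat.gcd b c) = Nat.gcd a c ∧
    Nat.lcm (Nat.gcd a b) (Nat.gcd b c) = b := by
  set d1 := Nat.gcd a b with hd1
  set d2 := Nat.gcd b c with hd2
  set g := Nat.gcd a c with hg
  have hd1pos : 0 < d1 := Nat.gcd_pos_of_pos_left b ha
  have hd2pos : 0 < d2 := Nat.gcd_pos_of_pos_left c hb
  have hgpos : 0 < g := Nat.gcd_pos_of_pos_left c ha
  have hGg : Nat.gcd d1 d2 ∣ g := by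
    apply Nat.dvd_gcd
    · exact (Nat.gcd_dvd_left d1 d2).trans (Nat.gcd_dvd_left a b)
    · exact (Nat.gcd_dvd_right d1 d2).trans (Nat.gcd_dvd_right b c)
  have hLb : Nat.lcm d1 d2 ∣ b := Nat.lcm_dvd (Nat.gcd_dvd_right a b) (Nat.gcd_dvd_left b c)
  have hGL : Nat.gcd d1 d2 * Nat.lcm d1 d2 = d1 * d2 := Nat.gcd_mul_lcm d1 d2
  have hGle : Nat.gcd d1 d2 ≤ g := Nat.le_of_dvd hgpos hGg
  have hLle : Nat.lcm d1 d2 ≤ b := Nat.le_of_dvd hb hLb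
  have hGpos : 0 < Nat.gcd d1 d2 := Nat.gcd_pos_of_pos_left d2 hd1pos
  have hLpos : 0 < Nat.lcm d1 d2 := Nat.pos_of_ne_zero (Nat.lcm_ne_zero hd1pos.ne' hd2pos.ne')
  have heq : Nat.gcd d1 d2 * Nat.lcm d1 d2 = g * b := by
    have h1 : Nat.gcd d1 d2 * Nat.lcm d1 d2 ≤ g * b :=
      Nat.mul_le_mul hGle hLle
    omega
  constructor
  · by_contra hne
    have hlt : Nat.gcd d1 d2 < g := lt_of_le_of_ne hGle hne
    have : Nat.gcd d1 d2 * Nat.lcm d1 d2 < g * b :=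
      lt_of_lt_of_le (Nat.mul_lt_mul_of_lt_of_le hlt hLle hb) le_rfl
    omega
  · by_contra hne
    have hlt : Nat.lcm d1 d2 < b := lt_of_le_of_ne hLle hne
    have : Nat.gcd d1 d2 * Nat.lcm d1 d2 < g * b :=
      Nat.mul_lt_mul_of_le_of_lt hGle hlt hgpos
    omega

theorem multiplicative_preserves_gcd_TN (f : ℕ → ℝ)
    (hmul : ∀ x y : ℕ, 0 < x → 0 < y → Nat.Coprime x y → f (x * y) = f x * f y)
    (hmono : ∀ x y : ℕ, 0 < x → 0 < y → x ∣ y → f x ≤ f y)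
    (n : ℕ) (x : Fin n → ℕ) (hx : ∀ i, 0 < x i) (hsm : StrictMono x)
    (S : Matrix (Fin n) (Fin n) ℝ)
    (hS : ∀ i j, S i j = (Nat.gcd (x i) (x j) : ℝ))
    (hTN : TotallyNonneg S)
    (T : Matrix (Fin n) (Fin n) ℝ)
    (hT : ∀ i j, T i j = f (Nat.gcd (x i) (x j))) :
    TotallyNonneg T := by
  intro k r c hr hc
  -- f 1 = 0 or f 1 = 1
  have h11 : f 1 = f 1 * f 1 := by
    have := hmul 1 1 one_pos one_pos (Nat.coprime_one_left 1)
    simpa using this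
  have h1cases : f 1 = 0 ∨ f 1 = 1 := by
    have : f 1 * (f 1 - 1) = 0 := by nlinarith [h11]
    rcases mul_eq_zero.mp this with h | h
    · exact Or.inl h
    · right; linarith
  rcases h1cases with h10 | h1
  · -- f vanishes identically on positives
    have hzero : ∀ m : ℕ, 0 < m → f m = 0 := by
      intro m hm
      have := hmul m 1 hm one_pos (Nat.coprime_one_right m)
      simpa [h10] using this
    cases k with
    | zero => rw [Matrix.det_isEmpty]; norm_num
    | succ k =>
      have : (T.submatrix r c).det = 0 := by
        apply Matrix.det_eq_zero_of_row_eq_zero 0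
        intro j
        rw [Matrix.submatrix_apply, hT]
        exact hzero _ (Nat.gcd_pos_of_pos_left _ (hx _))
      rw [this]
  -- main case: f 1 = 1, so f ≥ 1 on positives
  have hfge : ∀ m : ℕ, 0 < m → 1 ≤ f m := by
    intro m hm
    have := hmono 1 m one_pos hm (one_dvd m)
    linarith [this, h1.ge]
  -- if n = 0 then k = 0
  rcases Nat.eq_zero_or_pos n with hn0 | hn
  · cases k with
    | zero => rw [Matrix.det_isEmpty]; norm_num
    | succ k => exact absurd (r 0).isLt (by omega)
  -- setup
  set X : ℕ → ℕ := fun i => x ⟨min i (n-1), by omega⟩ with hX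
  have hXeq : ∀ i : Fin n, X i = x i := by
    intro i
    have : min (i : ℕ) (n-1) = i := min_eq_left (by omega)
    simp only [hX]
    congr 1
    exact Fin.ext this
  have hXpos : ∀ i, 0 < X i := fun i => hx _
  have hXmono : Monotone X := by
    intro i j hij
    exact hsm.monotone (by simp [Fin.mk_le_mk]; omega)
  set A : ℕ → ℝ := fun i => f (X i) with hA
  set B : ℕ → ℝ := fun i => f (Nat.gcd (X i) (X (i+1))) with hB
  have hA1 : ∀ i, 1 ≤ A i := fun i => hfge _ (hXpos i)
  have hB1 : ∀ i, 1 ≤ B i := fun i => hfge _ (Nat.gcd_pos_of_pos_left _ (hXpos i))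
  have hApos : ∀ i, 0 < A i := fun i => lt_of_lt_of_le one_pos (hA1 i)
  have hBpos : ∀ i, 0 < B i := fun i => lt_of_lt_of_le one_pos (hB1 i)
  set q : ℕ → ℝ := fun i => Nat.rec (motive := fun _ => ℝ) 1 (fun j qj => qj * B j / A j) i
    with hq
  have hq0 : q 0 = 1 := rfl
  have hqs : ∀ i, q (i + 1) = q i * B i / A i := fun i => rfl
  have hqpos : ∀ i, 0 < q i := by
    intro i
    induction i with
    | zero => rw [hq0]; norm_num
    | succ i ih =>
      rw [hqs]
      exact div_pos (mul_pos ih (hBpos i)) (hApos i)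
  set t : ℕ → ℝ := fun i => A i / (q i) ^ 2 with ht
  have htpos : ∀ i, 0 < t i := fun i => by
    have := hApos i; have := hqpos i; positivity
  -- B i ≤ A i and B i ≤ A (i+1)
  have hBA : ∀ i, B i ≤ A i := fun i =>
    hmono _ _ (Nat.gcd_pos_of_pos_left _ (hXpos i)) (hXpos i) (Nat.gcd_dvd_left _ _)
  have hBA' : ∀ i, B i ≤ A (i+1) := fun i =>
    hmono _ _ (Nat.gcd_pos_of_pos_left _ (hXpos i)) (hXpos (i+1)) (Nat.gcd_dvd_right _ _)
  have htmono : Monotone t := by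
    apply monotone_nat_of_le_succ
    intro i
    have key : B i * B i ≤ A i * A (i+1) := by
      nlinarith [hBA i, hBA' i, hB1 i]
    have hAi := hApos i
    have hAi' := hApos (i+1)
    have hqi := hqpos i
    have hBi := hBpos i
    have hqi1 := hqpos (i+1)
    rw [show t i = A i / q i ^ 2 from rfl, show t (i+1) = A (i+1) / q (i+1) ^ 2 from rfl,
      div_le_div_iff₀ (by positivity) (by positivity), hqs]
    have expand : A i * (q i * B i / A i) ^ 2 = q i ^ 2 * B i ^ 2 / A i := by
      field_simp
    rw [expand, div_le_iff₀ hAi]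
    nlinarith [mul_nonneg (sub_nonneg.mpr key) (sq_nonneg (q i))]
  -- TN-derived identity
  have hTNid : ∀ i j l : ℕ, i < j → j < l → l < n →
      f (Nat.gcd (X i) (X l)) * f (X j) =
      f (Nat.gcd (X i) (X j)) * f (Nat.gcd (X j) (X l)) := by
    intro i j l hij hjl hln
    have hfi : i < n := by omega
    have hfj : j < n := by omega
    have hfl : l < n := by omega
    set fi : Fin n := ⟨i, hfi⟩
    set fj : Fin n := ⟨j, hfj⟩
    set fl : Fin n := ⟨l, hfl⟩
    have hXi : X i = x fi := by
      show x _ = x fi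
      apply congrArg x
      apply Fin.ext
      show min i (n-1) = (fi : ℕ)
      simp only [fi]
      omega
    have hXj : X j = x fj := by
      show x _ = x fj
      apply congrArg x
      apply Fin.ext
      show min j (n-1) = (fj : ℕ)
      simp only [fj]
      omega
    have hXl : X l = x fl := by
      show x _ = x fl
      apply congrArg x
      apply Fin.ext
      show min l (n-1) = (fl : ℕ)
      simp only [fl]
      omega
    set r2 : Fin 2 → Fin n := fun m => if (m : ℕ) = 0 then fi else fj with hr2def
    set c2 : Fin 2 → Fin n := fun m => if (m : ℕ) = 0 then fj else fl with hc2def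
    have hfifj : fi < fj := by rw [Fin.lt_def]; exact hij
    have hfjfl : fj < fl := by rw [Fin.lt_def]; exact hjl
    have htwo : ∀ a b : Fin 2, a < b → (a : ℕ) = 0 ∧ (b : ℕ) = 1 := by
      intro a b hab
      have ha2 := a.isLt
      have hb2 := b.isLt
      have hv : (a : ℕ) < (b : ℕ) := hab
      omega
    have hr2 : StrictMono r2 := by
      intro a b hab
      obtain ⟨ha0, hb1⟩ := htwo a b hab
      simp only [hr2def, ha0, hb1, if_pos rfl]
      norm_num
      exact hfifj
    have hc2 : StrictMono c2 := by
      intro a b hab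
      obtain ⟨ha0, hb1⟩ := htwo a b hab
      simp only [hc2def, ha0, hb1, if_pos rfl]
      norm_num
      exact hfjfl
    have hdet := hTN 2 r2 c2 hr2 hc2
    rw [Matrix.det_fin_two] at hdet
    have e00 : r2 0 = fi := rfl
    have e01 : r2 1 = fj := rfl
    have e10 : c2 0 = fj := rfl
    have e11 : c2 1 = fl := rfl
    simp only [Matrix.submatrix_apply, e00, e01, e10, e11, hS, Nat.gcd_self] at hdet
    -- hdet : 0 ≤ gcd(x fi, x fj) * gcd(x fj, x fl) - gcd(x fi, x fl) * x fj
    have hnat : Nat.gcd (x fi) (x fl) * x fj ≤ Nat.gcd (x fi) (x fj) * Nat.gcd (x fj) (x fl) := by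
      have h' : ((Nat.gcd (x fi) (x fl) * x fj : ℕ) : ℝ) ≤
          ((Nat.gcd (x fi) (x fj) * Nat.gcd (x fj) (x fl) : ℕ) : ℝ) := by
        push_cast
        linarith [hdet]
      exact_mod_cast h'
    obtain ⟨hgcd, hlcm⟩ := gcd_struct (x fi) (x fj) (x fl) (hx fi) (hx fj) (hx fl) hnat
    have hid := f_gcd_mul_lcm f hmul h1 (Nat.gcd (x fi) (x fj)) (Nat.gcd (x fj) (x fl))
      (Nat.gcd_pos_of_pos_left _ (hx fi)).ne' (Nat.gcd_pos_of_pos_left _ (hx fj)).ne'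
    rw [hgcd, hlcm] at hid
    rw [hXi, hXj, hXl]
    linarith [hid]
  -- representation
  have hrep : ∀ j i : ℕ, i ≤ j → j < n → f (Nat.gcd (X i) (X j)) = q i * q j * t i := by
    intro j
    induction j with
    | zero =>
      intro i hi _
      have : i = 0 := Nat.le_zero.mp hi
      subst this
      rw [Nat.gcd_self, ht, hq0]
      show A 0 = 1 * 1 * (A 0 / 1 ^ 2)
      ring
    | succ j IHj =>
      intro i hi hjn
      rcases eq_or_lt_of_le hi with heq | hlt
      · subst heq
        rw [Nat.gcd_self]
        show A (j+1) = q (j+1) * q (j+1) * (A (j+1) / q (j+1) ^ 2)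
        have := hqpos (j+1)
        field_simp
      · have hij : i ≤ j := by omega
        have hjn' : j < n := by omega
        rcases eq_or_lt_of_le hij with heq2 | hlt2
        · subst heq2
          -- f (gcd (X i) (X (i+1))) = B i
          show B i = q i * q (i+1) * t i
          rw [hqs, ht]
          have := hqpos i; have := hApos i
          field_simp
        · -- i < j < j+1
          have hid := hTNid i j (j+1) hlt2 (by omega) hjn
          have hprev := IHj i hij hjn'
          -- f (gcd X i X (j+1)) * A j = f (gcd X i X j) * B j
          have hAj := hApos j
          have : f (Nat.gcd (X i) (X (j+1))) = f (Nat.gcd (X i) (X j)) * B j / A j := by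
            rw [eq_div_iff hAj.ne']
            exact hid
          rw [this, hprev, hqs]
          field_simp
  have hrep2 : ∀ i j : ℕ, i < n → j < n →
      f (Nat.gcd (X i) (X j)) = q i * q j * t (min i j) := by
    intro i j hi hj
    rcases le_total i j with h | h
    · rw [min_eq_left h, hrep j i h hj]
    · rw [min_eq_right h, Nat.gcd_comm, hrep i j h hi]
      ring
  -- final computation
  have hsub : T.submatrix r c =
      Matrix.of fun a b => (fun a => q (r a)) a *
        (Matrix.of fun a b => (fun b => q (c b)) b *
          (Matrix.of fun a b => t (min ((r a : ℕ)) ((c b : ℕ)))) a b) a b := by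
    ext a b
    simp only [Matrix.submatrix_apply, Matrix.of_apply, hT]
    rw [← hXeq (r a), ← hXeq (c b), hrep2 _ _ (r a).isLt (c b).isLt]
    ring
  rw [hsub, Matrix.det_mul_column, Matrix.det_mul_row]
  have hu : StrictMono fun a => ((r a : ℕ)) := fun a b hab => hr hab
  have hv : StrictMono fun a => ((c a : ℕ)) := fun a b hab => hc hab
  have hk := minker k t htmono (fun s => (htpos s).le) _ _ hu hv
  have hp1 : (0:ℝ) ≤ ∏ a, q (r a) := Finset.prod_nonneg fun a _ => (hqpos _).le
  have hp2 : (0:ℝ) ≤ ∏ b, q (c b) := Finset.prod_nonneg fun b _ => (hqpos _).le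
  calc (0:ℝ) ≤ (∏ a, q (r a)) * ((∏ b, q (c b)) *
      (Matrix.of fun a b => t (min ((r a : ℕ)) ((c b : ℕ)))).det) := by positivity
    _ = _ := by ring
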